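/- arXiv:1410.3764 — 10 statements merged into one kernel-verified Lean document; each statement's English description precedes it below -/
import Mathlib

section
/- For any integers n ≥ 1, α ≥ 1, k ≥ 1 and integer vector (x_0, x_1, ..., x_k) satisfying (1+α)x_0 ≤ n, (x_0+...+x_i)(1+x_i) ≤ n−i for all 1 ≤ i ≤ k, x_1 ≥ x_2 ≥ ... ≥ x_k ≥ 0, and x_0+...+x_k ≥ 0, there exists an integer k' ≥ 1 and an integer vector (x'_0, ..., x'_{k'}) satisfying the same system with x'_0 = ⌊n/(1+α)⌋ and x'_0+...+x'_{k'} ≥ x_0+...+x_k. -/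
theorem stmt_0 (n α : ℤ) (hn : 1 ≤ n) (hα : 1 ≤ α)
    (k : ℕ) (hk : 1 ≤ k) (x : ℕ → ℤ)
    (h0 : (1 + α) * x 0 ≤ n)
    (h1 : ∀ i, 1 ≤ i → i ≤ k →
      (x 0 + ∑ j ∈ Finset.Icc 1 i, x j) * (1 + x i) ≤ n - (i : ℤ))
    (h2 : ∀ i, 1 ≤ i → i < k → x (i + 1) ≤ x i)
    (h3 : 0 ≤ x k)
    (h4 : 0 ≤ x 0 + ∑ j ∈ Finset.Icc 1 k, x j) :
    ∃ (k' : ℕ) (x' : ℕ → ℤ), 1 ≤ k' ∧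
      x' 0 = n / (1 + α) ∧
      (1 + α) * x' 0 ≤ n ∧
      (∀ i, 1 ≤ i → i ≤ k' →
        (x' 0 + ∑ j ∈ Finset.Icc 1 i, x' j) * (1 + x' i) ≤ n - (i : ℤ)) ∧
      (∀ i, 1 ≤ i → i < k' → x' (i + 1) ≤ x' i) ∧
      0 ≤ x' k' ∧
      0 ≤ x' 0 + ∑ j ∈ Finset.Icc 1 k', x' j ∧
      x 0 + ∑ j ∈ Finset.Icc 1 k, x j ≤ x' 0 + ∑ j ∈ Finset.Icc 1 k', x' j := by
  classical
  set m : ℤ := n / (1 + α) with hm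
  have hα' : (0:ℤ) < 1 + α := by linarith
  have hm0 : 0 ≤ m := Int.ediv_nonneg (by linarith) (by linarith)
  have hmn : (1 + α) * m ≤ n := by
    rw [mul_comm]; exact Int.ediv_mul_le n (by linarith)
  have hx0m : x 0 ≤ m := (Int.le_ediv_iff_mul_le hα').mpr (by linarith)
  -- monotonicity on [1,k]
  have hmono : ∀ i j : ℕ, 1 ≤ i → i ≤ j → j ≤ k → x j ≤ x i := by
    intro i j hi hij hjk
    induction j with
    | zero => omega
    | succ j ih =>
      rcases Nat.lt_or_ge i (j+1) with h | h
      · exact le_trans (h2 j (by omega) (by omega)) (ih (by omega) (by omega))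
      · have : i = j + 1 := by omega
        rw [this]
  have hxnn : ∀ j : ℕ, 1 ≤ j → j ≤ k → 0 ≤ x j := fun j hj hjk =>
    le_trans h3 (hmono j k hj hjk le_rfl)
  by_cases hcase1 : x 0 + ∑ j ∈ Finset.Icc 1 k, x j ≤ m
  · -- small total: k' = 1, x'_1 = 0
    refine ⟨1, fun j => if j = 0 then m else 0, le_rfl, by simp, by simpa using hmn,
      ?_, by omega, by norm_num, ?_, ?_⟩
    · intro i hi1 hi2
      have hi : i = 1 := le_antisymm hi2 hi1
      subst hi
      simp only [Finset.Icc_self, Finset.sum_singleton]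
      norm_num
      have h2m : 2 * m ≤ n := by nlinarith
      push_cast
      omega
    · simp only [Finset.Icc_self, Finset.sum_singleton]
      norm_num [hm0]
    · simp only [Finset.Icc_self, Finset.sum_singleton]
      norm_num
      linarith
  push_neg at hcase1
  by_cases hd0 : m = x 0
  · -- d = 0 : the original solution already works
    exact ⟨k, x, hk, hd0.symm, h0, h1, h2, h3, h4, le_refl _⟩
  -- main case: d = m - x 0 ≥ 1 and total > m
  have hd1 : x 0 + 1 ≤ m := by
    rcases lt_or_eq_of_le hx0m with h | h
    · omega
    · exact absurd h.symm hd0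
  set X : ℤ := ∑ j ∈ Finset.Icc 1 k, x j with hX
  set T : ℤ := X - (m - x 0) with hT
  have hT1 : 1 ≤ T := by simp only [hT]; linarith
  have hXnn : ∀ j : ℕ, 1 ≤ j → j ≤ k → x j ≤ X := by
    intro j hj hjk
    exact Finset.single_le_sum (f := x) (fun l hl => by
      rw [Finset.mem_Icc] at hl; exact hxnn l hl.1 hl.2) (Finset.mem_Icc.mpr ⟨hj, hjk⟩)
  set g : ℤ → ℤ := fun c => ∑ j ∈ Finset.Icc 1 k, min (x j) c with hg
  have hgmono : ∀ a b : ℤ, a ≤ b → g a ≤ g b := by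
    intro a b hab
    exact Finset.sum_le_sum (fun j _ => min_le_min le_rfl hab)
  have hXpos : 0 ≤ X := by linarith
  have hPtop : T < g ((X.toNat : ℤ) + 1) := by
    have hXt : ((X.toNat : ℤ)) = X := Int.toNat_of_nonneg hXpos
    have : g X = X := by
      simp only [hg]
      conv_rhs => rw [hX]
      refine Finset.sum_congr rfl ?_
      intro j hj
      rw [Finset.mem_Icc] at hj
      exact min_eq_left (hXnn j hj.1 hj.2)
    have := hgmono X ((X.toNat : ℤ) + 1) (by omega)
    omega
  have hex : ∃ c : ℕ, T < g ((c : ℤ) + 1) := ⟨X.toNat, hPtop⟩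
  set c : ℕ := Nat.find hex with hcdef
  set C : ℤ := (c : ℤ) with hC
  have hc2 : T < g (C + 1) := Nat.find_spec hex
  have hc1 : g C ≤ T := by
    rcases Nat.eq_zero_or_pos c with h | h
    · have : g C = 0 := by
        simp only [hg]
        refine Finset.sum_eq_zero ?_
        intro j hj
        rw [Finset.mem_Icc] at hj
        rw [hC, h]
        simpa using min_eq_right (hxnn j hj.1 hj.2)
      omega
    · have hmin := Nat.find_min hex (m := c - 1) (by omega)
      push_neg at hmin
      have : ((c - 1 : ℕ) : ℤ) + 1 = C := by rw [hC]; push_cast; omega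
      rwa [this] at hmin
  set q : ℕ := ((Finset.Icc 1 k).filter (fun j => C + 1 ≤ x j)).card with hqdef
  have hgq : g (C + 1) = g C + q := by
    simp only [hg]
    have : ∀ j ∈ Finset.Icc 1 k,
        min (x j) (C + 1) = min (x j) C + (if C + 1 ≤ x j then (1:ℤ) else 0) := by
      intro j _
      rcases le_or_gt (C + 1) (x j) with h | h
      · rw [if_pos h, min_eq_right h, min_eq_right (by omega)]
      · rw [if_neg (not_le.mpr h), min_eq_left (by omega), min_eq_left (by omega), add_zero]
    rw [Finset.sum_congr rfl this, Finset.sum_add_distrib, Finset.sum_boole]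
  have hqk : q ≤ k := by
    have := Finset.card_le_card (Finset.filter_subset (fun j => C + 1 ≤ x j) (Finset.Icc 1 k))
    exact le_trans this (by simp)
  have hrq : T - g C < (q : ℤ) := by omega
  have hr0 : 0 ≤ T - g C := by omega
  set r : ℕ := (T - g C).toNat with hrdef
  have hrZ : (r : ℤ) = T - g C := Int.toNat_of_nonneg hr0
  have hrq' : r < q := by omega
  have hq1 : 1 ≤ q := by omega
  have hprefix : ∀ j : ℕ, 1 ≤ j → j ≤ q → C + 1 ≤ x j := by
    intro j hj hjq
    by_contra hcon
    push_neg at hcon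
    have hsub : (Finset.Icc 1 k).filter (fun l => C + 1 ≤ x l) ⊆ Finset.Icc 1 (j - 1) := by
      intro l hl
      rw [Finset.mem_filter, Finset.mem_Icc] at hl
      rw [Finset.mem_Icc]
      refine ⟨hl.1.1, ?_⟩
      by_contra hlc
      push_neg at hlc
      have : x l ≤ x j := hmono j l hj (by omega) hl.1.2
      omega
    have := Finset.card_le_card hsub
    rw [← hqdef] at this
    simp only [Nat.card_Icc] at this
    omega
  have hsuffix : ∀ j : ℕ, q < j → j ≤ k → x j ≤ C := by
    intro j hjq hjk
    by_contra hcon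
    push_neg at hcon
    have hsub : Finset.Icc 1 j ⊆ (Finset.Icc 1 k).filter (fun l => C + 1 ≤ x l) := by
      intro l hl
      rw [Finset.mem_Icc] at hl
      rw [Finset.mem_filter, Finset.mem_Icc]
      refine ⟨⟨hl.1, by omega⟩, ?_⟩
      have : x j ≤ x l := hmono l j hl.1 hl.2 hjk
      omega
    have := Finset.card_le_card hsub
    rw [← hqdef] at this
    simp only [Nat.card_Icc] at this
    omega
  set y : ℕ → ℤ := fun j => if j = 0 then m else if j ≤ r then C + 1 else min (x j) C
    with hy
  have hy0 : y 0 = m := by simp [hy]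
  have hC0 : (0:ℤ) ≤ C := by rw [hC]; positivity
  have hynn : ∀ j : ℕ, 1 ≤ j → j ≤ k → 0 ≤ y j := by
    intro j hj hjk
    simp only [hy, if_neg (show j ≠ 0 by omega)]
    split
    · omega
    · exact le_min (hxnn j hj hjk) hC0
  -- sum of y over [1,k] equals T
  have hfr : (Finset.Icc 1 k).filter (fun j => j ≤ r) = Finset.Icc 1 r := by
    ext l
    simp only [Finset.mem_filter, Finset.mem_Icc]
    omega
  have hsumk : ∑ j ∈ Finset.Icc 1 k, y j = T := by
    have hterm : ∀ j ∈ Finset.Icc 1 k,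
        y j = min (x j) C + (if j ≤ r then (1:ℤ) else 0) := by
      intro j hj
      rw [Finset.mem_Icc] at hj
      simp only [hy, if_neg (show j ≠ 0 by omega)]
      rcases le_or_gt j r with h | h
      · rw [if_pos h, if_pos h]
        have : C + 1 ≤ x j := hprefix j hj.1 (by omega)
        rw [min_eq_right (by omega)]
      · rw [if_neg (by omega), if_neg (by omega), add_zero]
    rw [Finset.sum_congr rfl hterm, Finset.sum_add_distrib, Finset.sum_boole, hfr]
    simp only [Nat.card_Icc]
    have : ((r + 1 - 1 : ℕ) : ℤ) = (r : ℤ) := by omega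
    rw [this, hrZ]
    have : ∑ j ∈ Finset.Icc 1 k, min (x j) C = g C := rfl
    omega
  -- Icc splitting
  have hsplit : ∀ (f : ℕ → ℤ) (i : ℕ), i ≤ k →
      ∑ j ∈ Finset.Icc 1 i, f j + ∑ j ∈ Finset.Ioc i k, f j = ∑ j ∈ Finset.Icc 1 k, f j := by
    intro f i hik
    have e : ∀ l : ℕ, Finset.Icc 1 l = Finset.Ioc 0 l := by
      intro l; ext a; simp only [Finset.mem_Icc, Finset.mem_Ioc]; omega
    rw [e i, e k]
    exact Finset.sum_Ioc_consecutive f (Nat.zero_le i) hik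
  have htail : ∀ i : ℕ, q ≤ i → i ≤ k →
      ∑ j ∈ Finset.Icc 1 i, y j = ∑ j ∈ Finset.Icc 1 i, x j - (m - x 0) := by
    intro i hqi hik
    have heq : ∑ j ∈ Finset.Ioc i k, y j = ∑ j ∈ Finset.Ioc i k, x j := by
      refine Finset.sum_congr rfl ?_
      intro j hj
      rw [Finset.mem_Ioc] at hj
      simp only [hy, if_neg (show j ≠ 0 by omega), if_neg (show ¬ j ≤ r by omega)]
      exact min_eq_left (hsuffix j (by omega) hj.2)
    have h5 := hsplit y i hik
    have h6 := hsplit x i hik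
    rw [hsumk] at h5
    rw [← hX] at h6
    simp only [hT] at h5
    omega
  have hYmono : ∀ i i' : ℕ, i ≤ i' → i' ≤ k →
      ∑ j ∈ Finset.Icc 1 i, y j ≤ ∑ j ∈ Finset.Icc 1 i', y j := by
    intro i i' hii hik
    refine Finset.sum_le_sum_of_subset_of_nonneg (Finset.Icc_subset_Icc_right hii) ?_
    intro j hj _
    rw [Finset.mem_Icc] at hj
    exact hynn j hj.1 (by omega)
  have hYnn : ∀ i : ℕ, i ≤ k → 0 ≤ ∑ j ∈ Finset.Icc 1 i, y j := by
    intro i hik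
    refine Finset.sum_nonneg ?_
    intro j hj
    rw [Finset.mem_Icc] at hj
    exact hynn j hj.1 (by omega)
  refine ⟨k, y, hk, hy0, by rw [hy0]; exact hmn, ?_, ?_, hynn k hk le_rfl, ?_, ?_⟩
  · -- main constraints
    intro i hi1 hik
    rw [hy0]
    rcases le_or_gt q i with hqi | hiq
    · -- tail region
      have hYi := htail i hqi hik
      have hyx : y i ≤ x i := by
        simp only [hy, if_neg (show i ≠ 0 by omega), if_neg (show ¬ i ≤ r by omega)]
        exact min_le_left _ _
      have hXi0 : 0 ≤ x 0 + ∑ j ∈ Finset.Icc 1 i, x j := by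
        have := hYnn i hik
        omega
      have hle : m + ∑ j ∈ Finset.Icc 1 i, y j = x 0 + ∑ j ∈ Finset.Icc 1 i, x j := by
        omega
      rw [hle]
      calc (x 0 + ∑ j ∈ Finset.Icc 1 i, x j) * (1 + y i)
          ≤ (x 0 + ∑ j ∈ Finset.Icc 1 i, x j) * (1 + x i) := by
            apply mul_le_mul_of_nonneg_left (by omega) hXi0
        _ ≤ n - (i : ℤ) := h1 i hi1 hik
    · -- front region: compare with constraint at q
      have hqcon := h1 q hq1 hqk
      have hYq := htail q le_rfl hqk
      have hyiC : y i ≤ C + 1 := by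
        simp only [hy, if_neg (show i ≠ 0 by omega)]
        split
        · exact le_refl _
        · have := min_le_right (x i) C; omega
      have hxq : C + 1 ≤ x q := hprefix q hq1 le_rfl
      have hYle : m + ∑ j ∈ Finset.Icc 1 i, y j ≤ x 0 + ∑ j ∈ Finset.Icc 1 q, x j := by
        have := hYmono i q (by omega) hqk
        omega
      have hYi0 : 0 ≤ m + ∑ j ∈ Finset.Icc 1 i, y j := by
        have := hYnn i hik; omega
      have hyi0 : 0 ≤ 1 + y i := by
        have := hynn i hi1 hik; omega
      have hb0 : 0 ≤ x 0 + ∑ j ∈ Finset.Icc 1 q, x j := le_trans hYi0 hYle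
      have hmul : (m + ∑ j ∈ Finset.Icc 1 i, y j) * (1 + y i)
          ≤ (x 0 + ∑ j ∈ Finset.Icc 1 q, x j) * (1 + x q) :=
        mul_le_mul hYle (by omega) hyi0 hb0
      have hqi' : (i : ℤ) < (q : ℤ) := by exact_mod_cast hiq
      linarith
  · -- monotone
    intro i hi1 hik
    simp only [hy, if_neg (show i + 1 ≠ 0 by omega), if_neg (show i ≠ 0 by omega)]
    rcases le_or_gt (i + 1) r with h | h
    · rw [if_pos h, if_pos (by omega)]
    · rw [if_neg (by omega)]
      rcases le_or_gt i r with h' | h'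
      · rw [if_pos h']
        have := min_le_right (x (i+1)) C
        omega
      · rw [if_neg (by omega)]
        exact min_le_min (h2 i hi1 hik) le_rfl
  · rw [hy0, hsumk]
    simp only [hT]
    omega
  · rw [hy0, hsumk]
    simp only [hT]
    omega
end

section
/- Suppose integers n, α, k and an integer vector (x_0, x_1, ..., x_k) satisfy: (1+α)x_0 ≤ n, (x_0+...+x_i)(1+x_i) ≤ n−i for i = 1,...,k, x_1 ≥ ... ≥ x_k ≥ 0, x_0+...+x_k ≥ 0, and x_0 < ⌊n/(1+α)⌋ with x_1 > 0. Let j be the greatest index with x_j = x_1, and define x'_0 = x_0+1, x'_j = x_j−1, and x'_i = x_i otherwise. Then (x'_0, ..., x'_k) also satisfies the system, and x'_0+...+x'_k = x_0+...+x_k. -/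
theorem stmt_1 (n α : ℤ) (hn : 1 ≤ n) (hα : 1 ≤ α)
    (k : ℕ) (hk : 1 ≤ k) (x : ℕ → ℤ)
    (h0 : (1 + α) * x 0 ≤ n)
    (h1 : ∀ i, 1 ≤ i → i ≤ k →
      (x 0 + ∑ j ∈ Finset.Icc 1 i, x j) * (1 + x i) ≤ n - (i : ℤ))
    (h2 : ∀ i, 1 ≤ i → i < k → x (i + 1) ≤ x i)
    (h3 : 0 ≤ x k)
    (h4 : 0 ≤ x 0 + ∑ j ∈ Finset.Icc 1 k, x j)
    (hx0 : x 0 < n / (1 + α)) (hx1 : 0 < x 1)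
    (j : ℕ) (hj1 : 1 ≤ j) (hjk : j ≤ k) (hxj : x j = x 1)
    (hjmax : ∀ i, j < i → i ≤ k → x i ≠ x 1)
    (x' : ℕ → ℤ)
    (hx' : ∀ i, x' i = if i = 0 then x 0 + 1 else if i = j then x j - 1 else x i) :
    (1 + α) * x' 0 ≤ n ∧
    (∀ i, 1 ≤ i → i ≤ k →
      (x' 0 + ∑ j' ∈ Finset.Icc 1 i, x' j') * (1 + x' i) ≤ n - (i : ℤ)) ∧
    (∀ i, 1 ≤ i → i < k → x' (i + 1) ≤ x' i) ∧
    0 ≤ x' k ∧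
    0 ≤ x' 0 + ∑ j' ∈ Finset.Icc 1 k, x' j' ∧
    x' 0 + ∑ j' ∈ Finset.Icc 1 k, x' j' = x 0 + ∑ j' ∈ Finset.Icc 1 k, x j' := by
  have hjne : j ≠ 0 := by omega
  have hx'0 : x' 0 = x 0 + 1 := by rw [hx' 0]; simp
  have hx'j : x' j = x j - 1 := by rw [hx' j]; simp [hjne]
  have hx'ne : ∀ i, i ≠ 0 → i ≠ j → x' i = x i := by
    intro i hi0 hij; rw [hx' i]; simp [hi0, hij]
  -- monotonicity of x on [1, k]
  have hxmono : ∀ a b : ℕ, 1 ≤ a → a ≤ b → b ≤ k → x b ≤ x a := by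
    intro a b ha hab hbk
    induction b with
    | zero => omega
    | succ m ih =>
      rcases Nat.lt_or_ge a (m + 1) with h | h
      · exact le_trans (h2 m (by omega) (by omega)) (ih (by omega) (by omega))
      · have : a = m + 1 := by omega
        rw [this]
  -- all x i with 1 ≤ i ≤ j equal x 1
  have hxall : ∀ i, 1 ≤ i → i ≤ j → x i = x 1 := by
    intro i hi hij
    have h₁ : x i ≤ x 1 := hxmono 1 i le_rfl hi (by omega)
    have h₂ : x j ≤ x i := hxmono i j hi hij hjk
    omega
  -- sum of x' on Icc 1 i
  have hsum : ∀ i : ℕ, ∑ m ∈ Finset.Icc 1 i, x' m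
      = (∑ m ∈ Finset.Icc 1 i, x m) - (if j ≤ i then 1 else 0) := by
    intro i
    have hcong : ∀ m ∈ Finset.Icc 1 i, x' m = x m - (if m = j then 1 else 0) := by
      intro m hm
      simp only [Finset.mem_Icc] at hm
      have hm0 : m ≠ 0 := by omega
      rcases eq_or_ne m j with h | h
      · rw [h, hx'j]; simp
      · rw [hx'ne m hm0 h]; simp [h]
    rw [Finset.sum_congr rfl hcong, Finset.sum_sub_distrib,
      Finset.sum_ite_eq' (Finset.Icc 1 i) j (fun _ => (1 : ℤ))]
    simp only [Finset.mem_Icc]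
    congr 1
    by_cases h : j ≤ i <;> simp [h, hj1]
  -- n - k ≥ 0
  have hnk : (k : ℤ) ≤ n := by
    have hSk := h1 k hk le_rfl
    have : (0 : ℤ) ≤ (x 0 + ∑ m ∈ Finset.Icc 1 k, x m) * (1 + x k) :=
      mul_nonneg h4 (by linarith)
    linarith
  have hjk' : (j : ℤ) ≤ (k : ℤ) := by exact_mod_cast hjk
  refine ⟨?_, ?_, ?_, ?_, ?_, ?_⟩
  · -- part 1
    have h1' : x 0 + 1 ≤ n / (1 + α) := hx0
    have := (Int.le_ediv_iff_mul_le (by linarith : (0 : ℤ) < 1 + α)).mp h1'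
    rw [hx'0]; linarith
  · -- part 2: main inequalities
    intro i hi hik
    have hi' : (1 : ℤ) ≤ (i : ℤ) := by exact_mod_cast hi
    rw [hx'0, hsum i]
    rcases lt_trichotomy i j with hij | hij | hij
    · -- i < j
      have hjile : ¬ j ≤ i := by omega
      rw [if_neg hjile]
      have hxi : x i = x 1 := hxall i hi (by omega)
      rw [hx'ne i (by omega) (by omega), hxi]
      -- split sum at i
      have hsplit : ∑ m ∈ Finset.Icc 1 j, x m
          = (∑ m ∈ Finset.Icc 1 i, x m) + ∑ m ∈ Finset.Ioc i j, x m := by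
        rw [show Finset.Icc 1 j = Finset.Ioc 0 j from Finset.Icc_add_one_left_eq_Ioc 0 j,
          show Finset.Icc 1 i = Finset.Ioc 0 i from Finset.Icc_add_one_left_eq_Ioc 0 i]
        exact (Finset.sum_Ioc_consecutive x (Nat.zero_le i) (le_of_lt hij)).symm
      have hconst : ∑ m ∈ Finset.Ioc i j, x m = ((j : ℤ) - (i : ℤ)) * x 1 := by
        rw [Finset.sum_congr rfl (fun m hm => by
          simp only [Finset.mem_Ioc] at hm
          exact hxall m (by omega) hm.2), Finset.sum_const, Nat.card_Ioc,
          nsmul_eq_mul, Nat.cast_sub (by omega : i ≤ j)]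
      have hj' := h1 j hj1 hjk
      rw [hxj, hsplit, hconst] at hj'
      have hd1 : (i : ℤ) + 1 ≤ (j : ℤ) := by exact_mod_cast hij
      nlinarith [hj', hd1,
        mul_nonneg (by linarith : (0:ℤ) ≤ (j:ℤ) - (i:ℤ) - 1) (by linarith : (0:ℤ) ≤ x 1),
        mul_nonneg (by linarith : (0:ℤ) ≤ (j:ℤ) - (i:ℤ)) (mul_nonneg (by linarith : (0:ℤ) ≤ x 1) (by linarith : (0:ℤ) ≤ x 1))]
    · -- i = j
      subst hij
      rw [if_pos le_rfl, hx'j, hxj]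
      have hi'' := h1 i hi hik
      rw [hxj] at hi''
      set S := x 0 + ∑ m ∈ Finset.Icc 1 i, x m with hS
      have hni : (i : ℤ) ≤ n := by linarith [hjk', hnk]
      have hgoal : S * x 1 ≤ n - (i : ℤ) := by
        rcases le_or_gt 0 S with hs | hs
        · nlinarith
        · nlinarith
      calc (x 0 + 1 + ((∑ m ∈ Finset.Icc 1 i, x m) - 1)) * (1 + (x 1 - 1))
            = S * x 1 := by rw [hS]; ring
        _ ≤ n - (i : ℤ) := hgoal
    · -- i > j
      rw [if_pos (by omega), hx'ne i (by omega) (by omega)]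
      have heq : x 0 + 1 + ((∑ m ∈ Finset.Icc 1 i, x m) - 1)
          = x 0 + ∑ m ∈ Finset.Icc 1 i, x m := by ring
      rw [heq]
      exact h1 i hi hik
  · -- part 3: monotone
    intro i hi hik
    rcases lt_trichotomy (i + 1) j with h | h | h
    · rw [hx'ne (i+1) (by omega) (by omega), hx'ne i (by omega) (by omega)]
      exact h2 i hi hik
    · -- i + 1 = j
      rw [h, hx'j, hx'ne i (by omega) (by omega), hxj, hxall i hi (by omega)]
      omega
    · rcases eq_or_ne i j with h' | h'
      · -- i = j
        subst h'
        rw [hx'j, hx'ne (i+1) (by omega) (by omega), hxj]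
        have h₁ : x (i + 1) ≤ x i := h2 i hi hik
        have h₂ : x (i + 1) ≠ x 1 := hjmax (i + 1) (by omega) (by omega)
        omega
      · rw [hx'ne (i+1) (by omega) (by omega), hx'ne i (by omega) (by omega)]
        exact h2 i hi hik
  · -- part 4
    rcases eq_or_ne k j with h | h
    · rw [h, hx'j, hxj]; omega
    · rw [hx'ne k (by omega) h]; exact h3
  · -- part 5
    rw [hx'0, hsum k, if_pos hjk]
    linarith [h4]
  · -- part 6
    rw [hx'0, hsum k, if_pos hjk]
    ring
end

section
/- Let m ≥ 1 and consider the real sequence (y_1, ..., y_m) uniquely determined by the linear system P_i(y) = n − i·x_0 for i = 1,...,m, where P_i(y) = Σ_{j=i}^{m} (1+(j−1)i) y_j. Then this sequence satisfies the recurrence y_i = y_{i+1}·(i+1)²/(1−i+i²) for i = 1,...,m−2, together with y_m = (n − m·x_0)/(1+m(m−1)) and y_{m−1} = (x_0 + (m−1)y_m)/(1+(m−1)(m−2)). -/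
theorem stmt_4 (n x₀ : ℝ) (m : ℕ) (hm : 1 ≤ m) (y : ℕ → ℝ)
    (hsys : ∀ i, 1 ≤ i → i ≤ m →
      ∑ j ∈ Finset.Icc i m, (1 + ((j : ℝ) - 1) * (i : ℝ)) * y j = n - (i : ℝ) * x₀) :
    (∀ i, 1 ≤ i → i ≤ m - 2 →
      y i = y (i + 1) * ((i : ℝ) + 1) ^ 2 / (1 - (i : ℝ) + (i : ℝ) ^ 2)) ∧
    y m = (n - (m : ℝ) * x₀) / (1 + (m : ℝ) * ((m : ℝ) - 1)) ∧
    (2 ≤ m →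
      y (m - 1) = (x₀ + ((m : ℝ) - 1) * y m) / (1 + ((m : ℝ) - 1) * ((m : ℝ) - 2))) := by
  have hym : (1 + (m : ℝ) * ((m : ℝ) - 1)) * y m = n - (m : ℝ) * x₀ := by
    have e := hsys m hm le_rfl
    rw [Finset.Icc_self, Finset.sum_singleton] at e
    linear_combination e
  have hm1 : (1 : ℝ) ≤ (m : ℝ) := by exact_mod_cast hm
  refine ⟨?_, ?_, ?_⟩
  · intro i h1 h2
    have hi2 : i + 2 ≤ m := by omega
    have e1 := hsys i h1 (by omega)
    have e2 := hsys (i + 1) (by omega) (by omega)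
    have e3 := hsys (i + 2) (by omega) hi2
    rw [show Finset.Icc i m = insert i (Finset.Icc (i + 1) m) by
        ext x; simp [Finset.mem_Icc]; omega,
      Finset.sum_insert (by simp)] at e1
    rw [show Finset.Icc (i + 1) m = insert (i + 1) (Finset.Icc (i + 2) m) by
        ext x; simp [Finset.mem_Icc]; omega] at e1 e2
    rw [Finset.sum_insert (by simp)] at e1 e2
    have hsum : ∑ j ∈ Finset.Icc (i + 2) m, (1 + ((j : ℝ) - 1) * (i : ℝ)) * y j
        = 2 * (∑ j ∈ Finset.Icc (i + 2) m,
              (1 + ((j : ℝ) - 1) * ((i + 1 : ℕ) : ℝ)) * y j)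
          - ∑ j ∈ Finset.Icc (i + 2) m,
              (1 + ((j : ℝ) - 1) * ((i + 2 : ℕ) : ℝ)) * y j := by
      rw [Finset.mul_sum, ← Finset.sum_sub_distrib]
      refine Finset.sum_congr rfl fun j _ => ?_
      push_cast
      ring
    rw [hsum] at e1
    push_cast at e1 e2 e3
    have hkey : (1 - (i : ℝ) + (i : ℝ) ^ 2) * y i = ((i : ℝ) + 1) ^ 2 * y (i + 1) := by
      linear_combination e1 - 2 * e2 + e3
    have hd : (1 : ℝ) - (i : ℝ) + (i : ℝ) ^ 2 ≠ 0 := by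
      nlinarith [sq_nonneg (2 * (i : ℝ) - 1)]
    field_simp
    linear_combination hkey
  · have hd : (1 : ℝ) + (m : ℝ) * ((m : ℝ) - 1) ≠ 0 := by nlinarith
    field_simp
    linear_combination hym
  · intro h2
    have hm2 : (2 : ℝ) ≤ (m : ℝ) := by exact_mod_cast h2
    have e1 := hsys (m - 1) (by omega) (by omega)
    have hmeq : m = (m - 1) + 1 := by omega
    rw [show Finset.Icc (m - 1) m = insert (m - 1) (Finset.Icc m m) by
        ext x; simp [Finset.mem_Icc]; omega,
      Finset.sum_insert (by simp; omega), Finset.Icc_self, Finset.sum_singleton] at e1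
    have hc : ((m - 1 : ℕ) : ℝ) = (m : ℝ) - 1 := by
      rw [Nat.cast_sub hm, Nat.cast_one]
    rw [hc] at e1
    have hkey : (1 + ((m : ℝ) - 1) * ((m : ℝ) - 2)) * y (m - 1)
        = x₀ + ((m : ℝ) - 1) * y m := by
      linear_combination e1 - hym
    have hd : (1 : ℝ) + ((m : ℝ) - 1) * ((m : ℝ) - 2) ≠ 0 := by nlinarith
    field_simp
    linear_combination hkey
end

section
/- Define the real sequence z_1 = 0, z_2 = 1/3, and z_{j+1} = z_j·(j−1)²/(1+j+j²) for j = 2,...,m−1. Then for every j = 1,...,m, one has Σ_{i=1}^{j} (1+(j−1)i) z_i = j − 1. -/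
theorem stmt_7 (m : ℕ) (hm : 2 ≤ m) (z : ℕ → ℝ)
    (hz1 : z 1 = 0) (hz2 : z 2 = 1 / 3)
    (hrec : ∀ j, 2 ≤ j → j ≤ m - 1 →
      z (j + 1) = z j * ((j : ℝ) - 1) ^ 2 / (1 + (j : ℝ) + (j : ℝ) ^ 2)) :
    ∀ j, 1 ≤ j → j ≤ m →
      ∑ i ∈ Finset.Icc 1 j, (1 + ((j : ℝ) - 1) * (i : ℝ)) * z i = (j : ℝ) - 1 := by
  have aux : ∀ j, 2 ≤ j → j ≤ m →
      (∑ i ∈ Finset.Icc 1 j, (i : ℝ) * z i) + ((j : ℝ) - 1) ^ 2 * z j = 1 := by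
    intro j hj
    induction j, hj using Nat.le_induction with
    | base =>
      intro _
      rw [show Finset.Icc 1 2 = {1, 2} by decide]
      simp [hz1, hz2]
      norm_num
    | succ n hn ih =>
      intro hsm
      have hnm : n ≤ m := le_trans (Nat.le_succ n) hsm
      have hrecn : z (n + 1) = z n * ((n : ℝ) - 1) ^ 2 / (1 + (n : ℝ) + (n : ℝ) ^ 2) :=
        hrec n hn (by omega)
      have hpos : (1 : ℝ) + (n : ℝ) + (n : ℝ) ^ 2 ≠ 0 := by positivity
      rw [Finset.sum_Icc_succ_top (by omega : 1 ≤ n + 1)]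
      have key : ((n : ℝ) + 1) * z (n + 1) + (((n : ℕ) + 1 : ℝ) - 1) ^ 2 * z (n + 1)
          = ((n : ℝ) - 1) ^ 2 * z n := by
        push_cast
        rw [hrecn]
        field_simp
        ring
      push_cast
      push_cast at ih key
      linarith [ih hnm, key]
  intro j hj
  induction j, hj using Nat.le_induction with
  | base =>
    intro _
    simp [hz1]
  | succ n hn ih =>
    intro hsm
    have hnm : n ≤ m := le_trans (Nat.le_succ n) hsm
    have ihn := ih hnm
    rcases Nat.lt_or_ge n 2 with h | h
    · interval_cases n
      rw [show Finset.Icc 1 2 = {1, 2} by decide]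
      simp [hz1, hz2]
      norm_num
    · have haux := aux n h hnm
      have hrecn := hrec n h (by omega)
      have hpos : (1 : ℝ) + (n : ℝ) + (n : ℝ) ^ 2 ≠ 0 := by positivity
      have hz' : (1 + (n : ℝ) + (n : ℝ) ^ 2) * z (n + 1) = ((n : ℝ) - 1) ^ 2 * z n := by
        rw [hrecn]; field_simp
      rw [Finset.sum_Icc_succ_top (by omega : 1 ≤ n + 1)]
      have expand : ∑ i ∈ Finset.Icc 1 n, (1 + (((n : ℕ) + 1 : ℝ) - 1) * (i : ℝ)) * z i
          = (∑ i ∈ Finset.Icc 1 n, (1 + ((n : ℝ) - 1) * (i : ℝ)) * z i)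
            + (∑ i ∈ Finset.Icc 1 n, (i : ℝ) * z i) := by
        rw [← Finset.sum_add_distrib]
        apply Finset.sum_congr rfl
        intro i _
        push_cast
        ring
      push_cast
      push_cast at expand
      rw [expand, ihn]
      push_cast at haux hz'
      linarith
end

section
/- Let n, x_0 be reals, m ≥ 2, and let (y_1, ..., y_m) be the unique real solution of Σ_{j=i}^{m} (1+(j−1)i)y_j = n − i·x_0 for i = 1,...,m. Then x_0 + Σ_{j=1}^{m} (j−1)y_j = ((m−1)n + x_0)/m · Π_{i=1}^{m−1} (i+i²)/(1+i+i²). -/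
open Finset

lemma aux_pos1 (t : ℝ) : t^2 - t + 1 > 0 := by nlinarith [sq_nonneg (2*t-1)]
lemma aux_pos2 (t : ℝ) : 1 + t + t^2 > 0 := by nlinarith [sq_nonneg (2*t+1)]

lemma key_step (n x₀ : ℝ) (m : ℕ) (y : ℕ → ℝ)
    (hsys : ∀ i, 1 ≤ i → i ≤ m →
      ∑ j ∈ Finset.Icc i m, (1 + ((j : ℝ) - 1) * (i : ℝ)) * y j = n - (i : ℝ) * x₀)
    (i : ℕ) (hi : 1 ≤ i) (him : i < m) :
    ((i:ℝ)^2 - i + 1) * y i = x₀ + ∑ j ∈ Finset.Ioc i m, ((j:ℝ) - 1) * y j := by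
  have h1 := hsys i hi (le_of_lt him)
  have h2 := hsys (i+1) (by omega) (by omega)
  rw [Finset.Icc_eq_cons_Ioc (le_of_lt him), Finset.sum_cons] at h1
  rw [Finset.Icc_add_one_left_eq_Ioc] at h2
  push_cast at h1 h2 ⊢
  have hz : (∑ j ∈ Finset.Ioc i m, (1 + ((j:ℝ)-1) * (i:ℝ)) * y j)
      - (∑ j ∈ Finset.Ioc i m, (1 + ((j:ℝ)-1) * ((i:ℝ)+1)) * y j)
      + (∑ j ∈ Finset.Ioc i m, ((j:ℝ)-1) * y j) = 0 := by
    rw [← Finset.sum_sub_distrib, ← Finset.sum_add_distrib]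
    apply Finset.sum_eq_zero
    intro j _
    ring
  linear_combination h1 - h2 - hz

lemma down_lemma (n x₀ : ℝ) (m : ℕ) (hm : 2 ≤ m) (y : ℕ → ℝ)
    (hsys : ∀ i, 1 ≤ i → i ≤ m →
      ∑ j ∈ Finset.Icc i m, (1 + ((j : ℝ) - 1) * (i : ℝ)) * y j = n - (i : ℝ) * x₀) :
    ∀ k, k ≤ m - 1 →
      x₀ + ∑ j ∈ Finset.Icc (m - k) m, ((j:ℝ) - 1) * y j =
        (((m:ℝ) - 1) * n + x₀) / ((m:ℝ)^2 - m + 1) *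
          ∏ t ∈ Finset.Icc (m - k) (m - 1), (t:ℝ)^2 / ((t:ℝ)^2 - t + 1) := by
  intro k
  induction k with
  | zero =>
    intro _
    simp only [Nat.sub_zero]
    rw [Finset.Icc_self, Finset.sum_singleton,
      Finset.Icc_eq_empty (by omega : ¬ m ≤ m - 1), Finset.prod_empty]
    have h1 := hsys m (by omega) le_rfl
    rw [Finset.Icc_self, Finset.sum_singleton] at h1
    have hd : (m:ℝ)^2 - m + 1 ≠ 0 := ne_of_gt (aux_pos1 _)
    have hd' : (m:ℝ) * ((m:ℝ) - 1) + 1 ≠ 0 := by nlinarith [aux_pos1 (m:ℝ)]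
    field_simp
    linear_combination ((m:ℝ) - 1) * h1
  | succ k ih =>
    intro hk
    have ih' := ih (by omega)
    set i := m - (k+1) with hidef
    have hi1 : 1 ≤ i := by omega
    have him : i < m := by omega
    have hieq : m - k = i + 1 := by omega
    rw [hieq] at ih'
    have hkey := key_step n x₀ m y hsys i hi1 him
    rw [← Finset.Icc_add_one_left_eq_Ioc] at hkey
    have hsplit : ∑ j ∈ Finset.Icc i m, ((j:ℝ) - 1) * y j
        = ((i:ℝ) - 1) * y i + ∑ j ∈ Finset.Icc (i+1) m, ((j:ℝ) - 1) * y j := by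
      rw [Finset.Icc_eq_cons_Ioc (le_of_lt him), Finset.sum_cons, Finset.Icc_add_one_left_eq_Ioc]
    have hpsplit : ∏ t ∈ Finset.Icc i (m-1), (t:ℝ)^2 / ((t:ℝ)^2 - t + 1)
        = ((i:ℝ)^2 / ((i:ℝ)^2 - i + 1)) *
          ∏ t ∈ Finset.Icc (i+1) (m-1), (t:ℝ)^2 / ((t:ℝ)^2 - t + 1) := by
      rw [Finset.Icc_eq_cons_Ioc (by omega : i ≤ m - 1), Finset.prod_cons, Finset.Icc_add_one_left_eq_Ioc]
    rw [hsplit, hpsplit]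
    have hd : (i:ℝ)^2 - i + 1 ≠ 0 := ne_of_gt (aux_pos1 _)
    set B := ∑ j ∈ Finset.Icc (i+1) m, ((j:ℝ) - 1) * y j
    set P := ∏ t ∈ Finset.Icc (i+1) (m-1), (t:ℝ)^2 / ((t:ℝ)^2 - t + 1)
    set C := (((m:ℝ) - 1) * n + x₀) / ((m:ℝ)^2 - m + 1)
    have hd' : (i:ℝ) * ((i:ℝ) - 1) + 1 ≠ 0 := by nlinarith [aux_pos1 (i:ℝ)]
    field_simp
    linear_combination (((i:ℝ)^2 - i + 1) * ih') + (((i:ℝ) - 1) * hkey) + (((i:ℝ) - 1) * ih')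

lemma prod_id : ∀ m : ℕ,
    ((m:ℝ) + 1) * ∏ t ∈ Finset.Icc 1 m, (t:ℝ)^2 / ((t:ℝ)^2 - t + 1) =
      (((m:ℝ) + 1)^2 - ((m:ℝ) + 1) + 1) *
        ∏ i ∈ Finset.Icc 1 m, ((i:ℝ) + (i:ℝ)^2) / (1 + (i:ℝ) + (i:ℝ)^2) := by
  intro m
  induction m with
  | zero => norm_num
  | succ m ih =>
    rw [Finset.prod_Icc_succ_top (by omega : 1 ≤ m + 1),
        Finset.prod_Icc_succ_top (by omega : 1 ≤ m + 1)]
    have hd1 : ((m:ℝ)+1)^2 - ((m:ℝ)+1) + 1 ≠ 0 := ne_of_gt (aux_pos1 _)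
    have hd2 : 1 + ((m:ℝ)+1) + ((m:ℝ)+1)^2 ≠ 0 := ne_of_gt (aux_pos2 _)
    have hm1 : (m:ℝ) + 1 ≠ 0 := by positivity
    set P := ∏ t ∈ Finset.Icc 1 m, (t:ℝ)^2 / ((t:ℝ)^2 - t + 1)
    set Q := ∏ i ∈ Finset.Icc 1 m, ((i:ℝ) + (i:ℝ)^2) / (1 + (i:ℝ) + (i:ℝ)^2)
    push_cast
    have hd3 : ((m:ℝ) + 1) * ((m:ℝ) + 1 - 1) + 1 ≠ 0 := by nlinarith [aux_pos1 ((m:ℝ) + 1)]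
    field_simp
    linear_combination ((m:ℝ) + 2) * ((m:ℝ)^2 + 3*(m:ℝ) + 3) * ih

theorem stmt_8 (n x₀ : ℝ) (m : ℕ) (hm : 2 ≤ m) (y : ℕ → ℝ)
    (hsys : ∀ i, 1 ≤ i → i ≤ m →
      ∑ j ∈ Finset.Icc i m, (1 + ((j : ℝ) - 1) * (i : ℝ)) * y j = n - (i : ℝ) * x₀) :
    x₀ + ∑ j ∈ Finset.Icc 1 m, ((j : ℝ) - 1) * y j =
      (((m : ℝ) - 1) * n + x₀) / (m : ℝ) *
        ∏ i ∈ Finset.Icc 1 (m - 1), ((i : ℝ) + (i : ℝ) ^ 2) / (1 + (i : ℝ) + (i : ℝ) ^ 2) := by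
  have hd := down_lemma n x₀ m hm y hsys (m - 1) le_rfl
  rw [show m - (m - 1) = 1 from by omega] at hd
  rw [hd]
  have hp := prod_id (m - 1)
  have hc : ((m - 1 : ℕ) : ℝ) = (m:ℝ) - 1 := by
    rw [Nat.cast_sub (by omega : 1 ≤ m)]; norm_num
  rw [hc] at hp
  have hm0 : (m:ℝ) ≠ 0 := by positivity
  have hd1 : (m:ℝ)^2 - m + 1 ≠ 0 := ne_of_gt (aux_pos1 _)
  set P := ∏ t ∈ Finset.Icc 1 (m-1), (t:ℝ)^2 / ((t:ℝ)^2 - t + 1)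
  set Q := ∏ i ∈ Finset.Icc 1 (m-1), ((i:ℝ) + (i:ℝ)^2) / (1 + (i:ℝ) + (i:ℝ)^2)
  have hd' : (m:ℝ) * ((m:ℝ) - 1) + 1 ≠ 0 := by nlinarith [aux_pos1 (m:ℝ)]
  field_simp
  linear_combination (((m:ℝ) - 1) * n + x₀) * hp
end

section
/- Define F(z, m) = ((m−1)+z)/m · Π_{i=1}^{m−1} (i+i²)/(1+i+i²) for real z ∈ [0,1] and integer m ≥ 1. Then for fixed z > 0, F(z, m) is increasing in m on the range m ≤ 1/z, i.e., if 1 ≤ m < m+1 ≤ 1/z then F(z, m) ≤ F(z, m+1). -/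
noncomputable def F (z : ℝ) (m : ℕ) : ℝ :=
  (((m : ℝ) - 1) + z) / (m : ℝ) *
    ∏ i ∈ Finset.Icc 1 (m - 1), ((i : ℝ) + (i : ℝ) ^ 2) / (1 + (i : ℝ) + (i : ℝ) ^ 2)

theorem stmt_9 (z : ℝ) (hz0 : 0 < z) (hz1 : z ≤ 1) (m : ℕ) (hm : 1 ≤ m)
    (hle : ((m : ℝ) + 1) ≤ 1 / z) :
    F z m ≤ F z (m + 1) := by
  have hM : (1:ℝ) ≤ (m:ℝ) := by exact_mod_cast hm
  have hzM : z * ((m:ℝ) + 1) ≤ 1 := by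
    rw [le_div_iff₀ hz0] at hle; linarith
  have hP : 0 ≤ ∏ i ∈ Finset.Icc 1 (m-1), ((i:ℝ)+(i:ℝ)^2)/(1+(i:ℝ)+(i:ℝ)^2) := by
    apply Finset.prod_nonneg; intro i _; positivity
  have hm1 : m - 1 + 1 = m := Nat.succ_pred_eq_of_pos hm
  have hprod : ∏ i ∈ Finset.Icc 1 ((m+1) - 1), ((i:ℝ)+(i:ℝ)^2)/(1+(i:ℝ)+(i:ℝ)^2)
      = (∏ i ∈ Finset.Icc 1 (m-1), ((i:ℝ)+(i:ℝ)^2)/(1+(i:ℝ)+(i:ℝ)^2))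
        * (((m:ℝ)+(m:ℝ)^2)/(1+(m:ℝ)+(m:ℝ)^2)) := by
    have : (m+1) - 1 = (m-1) + 1 := by omega
    rw [this, Finset.prod_Icc_succ_top (by omega : 1 ≤ m - 1 + 1), hm1]
  unfold F
  rw [hprod, Nat.cast_add, Nat.cast_one]
  set M := (m:ℝ) with hMdef
  have hc : (M - 1 + z) / M ≤ (M + 1 - 1 + z) / (M + 1) * ((M + M^2)/(1 + M + M^2)) := by
    rw [div_mul_div_comm, div_le_div_iff₀ (by linarith) (by nlinarith)]
    nlinarith [sq_nonneg M, mul_pos hz0 hz0]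
  calc (M - 1 + z) / M * _ ≤ (M + 1 - 1 + z) / (M + 1) * ((M + M^2)/(1 + M + M^2)) * _ :=
        mul_le_mul_of_nonneg_right hc hP
    _ = _ := by ring
end

section
/- The infinite product Π_{i=1}^{∞} (i+i²)/(1+i+i²) converges and equals π/cosh(√3·π/2). -/
open Filter Real

noncomputable def aC : ℂ := (1 + Real.sqrt 3 * Complex.I) / 2

lemma hab : aC * (1 - aC) = 1 := by
  have h3 : (Real.sqrt 3 : ℂ) ^ 2 = 3 := by
    rw [← Complex.ofReal_pow, Real.sq_sqrt (by norm_num : (0:ℝ) ≤ 3)]; norm_num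
  have hI : Complex.I ^ 2 = -1 := Complex.I_sq
  have hsq : ((Real.sqrt 3 : ℂ) * Complex.I) ^ 2 = -3 := by
    rw [mul_pow, h3, hI]; ring
  unfold aC
  linear_combination (-1/4 : ℂ) * hsq

lemma factor_eq (j : ℕ) : (aC + j) * ((1 - aC) + j) = (j:ℂ)^2 + j + 1 := by
  linear_combination hab

lemma denom_ne (i : ℕ) : ((i:ℂ)^2 + i + 1) ≠ 0 := by
  have : ((i:ℂ)^2 + i + 1) = (((i:ℝ)^2 + i + 1 : ℝ) : ℂ) := by push_cast; ring
  rw [this]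
  exact_mod_cast (by positivity : ((i:ℝ)^2 + i + 1) ≠ 0)

lemma numer_prod (n : ℕ) :
    ∏ i ∈ Finset.Icc 1 n, ((i:ℂ) + (i:ℂ)^2) = (n.factorial : ℂ) * ((n+1).factorial : ℂ) := by
  induction n with
  | zero => simp
  | succ n ih =>
    rw [Finset.prod_Icc_succ_top (Nat.le_add_left 1 n), ih]
    push_cast [Nat.factorial_succ]
    ring

lemma denom_prod (n : ℕ) :
    ∏ j ∈ Finset.range (n+1), ((j:ℂ)^2 + j + 1)
      = ∏ i ∈ Finset.Icc 1 n, (1 + (i:ℂ) + (i:ℂ)^2) := by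
  induction n with
  | zero => simp
  | succ n ih =>
    rw [Finset.prod_range_succ, ih, Finset.prod_Icc_succ_top (Nat.le_add_left 1 n)]
    push_cast
    ring

lemma key (n : ℕ) (hn : 1 ≤ n) :
    ∏ i ∈ Finset.Icc 1 n, (((i:ℂ) + (i:ℂ)^2) / (1 + (i:ℂ) + (i:ℂ)^2))
      = ((n:ℂ)+1)/n * (Complex.GammaSeq aC n * Complex.GammaSeq (1-aC) n) := by
  have hn0 : (n:ℂ) ≠ 0 := Nat.cast_ne_zero.mpr (by omega)
  have hD : ∏ i ∈ Finset.Icc 1 n, (1 + (i:ℂ) + (i:ℂ)^2) ≠ 0 := by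
    apply Finset.prod_ne_zero_iff.mpr
    intro i _
    have := denom_ne i
    intro h; apply this; linear_combination h
  have hPab : (∏ j ∈ Finset.range (n+1), (aC + j)) * (∏ j ∈ Finset.range (n+1), ((1-aC) + j))
      = ∏ i ∈ Finset.Icc 1 n, (1 + (i:ℂ) + (i:ℂ)^2) := by
    rw [← Finset.prod_mul_distrib, ← denom_prod]
    exact Finset.prod_congr rfl (fun j _ => factor_eq j)
  have hpow : (n:ℂ) ^ aC * (n:ℂ) ^ (1 - aC) = (n:ℂ) := by
    rw [← Complex.cpow_add _ _ hn0]
    simp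
  rw [Finset.prod_div_distrib, numer_prod]
  rw [Complex.GammaSeq, Complex.GammaSeq]
  rw [div_mul_div_comm, div_mul_div_comm]
  rw [hPab]
  rw [show (n:ℂ) ^ aC * ↑n.factorial * ((n:ℂ) ^ (1-aC) * ↑n.factorial)
      = ((n:ℂ) ^ aC * (n:ℂ) ^ (1-aC)) * (↑n.factorial * ↑n.factorial) by ring, hpow]
  rw [div_eq_div_iff hD (mul_ne_zero hn0 hD)]
  push_cast [Nat.factorial_succ]
  ring

theorem stmt_11 :
    Tendsto (fun m : ℕ =>
        ∏ i ∈ Finset.Icc 1 m, ((i : ℝ) + (i : ℝ) ^ 2) / (1 + (i : ℝ) + (i : ℝ) ^ 2))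
      atTop (nhds (π / Real.cosh (Real.sqrt 3 * π / 2))) := by
  set L : ℝ := π / Real.cosh (Real.sqrt 3 * π / 2) with hL
  -- complex limit
  have hsin : Complex.sin (π * aC) = (Real.cosh (Real.sqrt 3 * π / 2) : ℂ) := by
    have : (π : ℂ) * aC = (π/2 : ℝ) + ((Real.sqrt 3 * π / 2 : ℝ) : ℂ) * Complex.I := by
      unfold aC; push_cast; ring
    rw [this, Complex.sin_add]
    rw [show ((π/2 : ℝ) : ℂ) = (π/2 : ℂ) by push_cast; ring]
    rw [Complex.sin_pi_div_two, Complex.cos_pi_div_two, Complex.cos_mul_I]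
    rw [Complex.ofReal_cosh]
    ring
  have hGG : Complex.Gamma aC * Complex.Gamma (1 - aC) = (L : ℂ) := by
    rw [Complex.Gamma_mul_Gamma_one_sub, hsin, hL]
    push_cast
    ring
  have hcosh0 : Real.cosh (Real.sqrt 3 * π / 2) ≠ 0 := (Real.cosh_pos _).ne'
  -- tendsto of complex sequence
  have h1 : Tendsto (fun n : ℕ => ((n:ℂ)+1)/n) atTop (nhds 1) := by
    have hr : Tendsto (fun n : ℕ => ((n:ℝ)+1)/n) atTop (nhds 1) := by
      have : (fun n : ℕ => ((n:ℝ)+1)/n) =ᶠ[atTop] (fun n : ℕ => 1 + 1/n) := by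
        filter_upwards [eventually_ge_atTop 1] with n hn
        have : (n:ℝ) ≠ 0 := Nat.cast_ne_zero.mpr (by omega)
        field_simp
      rw [tendsto_congr' this]
      have := tendsto_one_div_atTop_nhds_zero_nat (𝕜 := ℝ)
      have h2 := (tendsto_const_nhds (x := (1:ℝ)) (f := atTop (α := ℕ))).add this
      simpa using h2
    have : (fun n : ℕ => ((n:ℂ)+1)/n) = (fun x : ℝ => (x:ℂ)) ∘ (fun n : ℕ => ((n:ℝ)+1)/n) := by
      funext n; simp [Function.comp]
    rw [this]
    exact (Complex.continuous_ofReal.tendsto 1).comp hr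
  have hG : Tendsto (fun n : ℕ => ((n:ℂ)+1)/n *
      (Complex.GammaSeq aC n * Complex.GammaSeq (1-aC) n)) atTop (nhds ((L : ℂ))) := by
    have := h1.mul ((Complex.GammaSeq_tendsto_Gamma aC).mul
      (Complex.GammaSeq_tendsto_Gamma (1-aC)))
    rw [one_mul, hGG] at this
    exact this
  have hC : Tendsto (fun m : ℕ =>
      ∏ i ∈ Finset.Icc 1 m, (((i:ℂ) + (i:ℂ)^2) / (1 + (i:ℂ) + (i:ℂ)^2))) atTop
      (nhds ((L : ℂ))) := by
    rw [tendsto_congr' (by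
      filter_upwards [eventually_ge_atTop 1] with n hn
      exact key n hn)]
    exact hG
  -- transfer to ℝ via re
  have heq : ∀ m : ℕ, ((∏ i ∈ Finset.Icc 1 m,
      ((i : ℝ) + (i : ℝ) ^ 2) / (1 + (i : ℝ) + (i : ℝ) ^ 2) : ℝ) : ℂ)
      = ∏ i ∈ Finset.Icc 1 m, (((i:ℂ) + (i:ℂ)^2) / (1 + (i:ℂ) + (i:ℂ)^2)) := by
    intro m; push_cast; rfl
  have hC2 : Tendsto (fun m : ℕ => ((∏ i ∈ Finset.Icc 1 m,
      ((i : ℝ) + (i : ℝ) ^ 2) / (1 + (i : ℝ) + (i : ℝ) ^ 2) : ℝ) : ℂ)) atTop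
      (nhds ((L : ℂ))) := by
    have hfeq : (fun m : ℕ => ((∏ i ∈ Finset.Icc 1 m,
        ((i : ℝ) + (i : ℝ) ^ 2) / (1 + (i : ℝ) + (i : ℝ) ^ 2) : ℝ) : ℂ))
        = fun m : ℕ => ∏ i ∈ Finset.Icc 1 m, (((i:ℂ) + (i:ℂ)^2) / (1 + (i:ℂ) + (i:ℂ)^2)) :=
      funext heq
    rw [hfeq]; exact hC
  have h2 := (Complex.continuous_re.tendsto _).comp hC2
  simpa only [Function.comp_def, Complex.ofReal_re] using h2
end

section
/- The limit as m → ∞ of F(0, m) = (m−1)/m · Π_{i=1}^{m−1} (i+i²)/(1+i+i²) exists and equals π/cosh(√3·π/2) ≈ 0.412. -/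
open Filter Real

noncomputable def F0 (m : ℕ) : ℝ :=
  ((m : ℝ) - 1) / (m : ℝ) *
    ∏ i ∈ Finset.Icc 1 (m - 1), ((i : ℝ) + (i : ℝ) ^ 2) / (1 + (i : ℝ) + (i : ℝ) ^ 2)

noncomputable def zc : ℂ := 1/2 + (Real.sqrt 3 / 2) * Complex.I

lemma zc_mul : zc * (1 - zc) = 1 := by
  have h3 : (Real.sqrt 3 : ℝ) ^ 2 = 3 := Real.sq_sqrt (by norm_num)
  unfold zc
  apply Complex.ext <;>
    simp [Complex.add_re, Complex.add_im, Complex.mul_re, Complex.mul_im, Complex.sub_re,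
      Complex.sub_im, Complex.div_ofNat_re, Complex.div_ofNat_im] <;> nlinarith [h3]

lemma prod_fact (n : ℕ) :
    ∏ i ∈ Finset.Icc 1 n, ((i : ℝ) + (i : ℝ) ^ 2) = (n.factorial : ℝ) * ((n + 1).factorial : ℝ) := by
  induction n with
  | zero => simp
  | succ n ih =>
    rw [Finset.prod_Icc_succ_top (Nat.le_add_left 1 n), ih]
    push_cast [Nat.factorial_succ]
    ring

lemma prod_den (n : ℕ) :
    ∏ i ∈ Finset.Icc 1 n, (1 + (i : ℝ) + (i : ℝ) ^ 2)
      = ∏ j ∈ Finset.range (n + 1), ((j : ℝ) ^ 2 + (j : ℝ) + 1) := by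
  induction n with
  | zero => simp
  | succ n ih =>
    rw [Finset.prod_Icc_succ_top (Nat.le_add_left 1 n), ih, Finset.prod_range_succ _ (n+1)]
    push_cast; ring

lemma den_pos (n : ℕ) : 0 < ∏ j ∈ Finset.range (n + 1), ((j : ℝ) ^ 2 + (j : ℝ) + 1) :=
  Finset.prod_pos fun j _ => by positivity

lemma F0_eq (n : ℕ) (hn : 1 ≤ n) :
    F0 (n + 1) = (n : ℝ) * (n.factorial : ℝ) ^ 2 / ∏ j ∈ Finset.range (n + 1), ((j : ℝ) ^ 2 + (j : ℝ) + 1) := by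
  have hd := (den_pos n).ne'
  have hn1 : ((n : ℝ) + 1) ≠ 0 := by positivity
  rw [F0]
  have h1 : (n + 1 : ℕ) - 1 = n := by omega
  rw [h1, Finset.prod_div_distrib, prod_fact, prod_den]
  push_cast [Nat.factorial_succ]
  field_simp
  ring

lemma gammaSeq_prod (n : ℕ) :
    Complex.GammaSeq zc n * Complex.GammaSeq (1 - zc) n
      = (n : ℂ) ^ (zc : ℂ) * (n : ℂ) ^ (1 - zc) * ((n.factorial : ℂ)) ^ 2
          / ∏ j ∈ Finset.range (n + 1), ((j : ℂ) ^ 2 + (j : ℂ) + 1) := by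
  rw [Complex.GammaSeq, Complex.GammaSeq, div_mul_div_comm, ← Finset.prod_mul_distrib]
  have : ∀ j ∈ Finset.range (n + 1), (zc + (j : ℂ)) * (1 - zc + (j : ℂ)) = (j : ℂ) ^ 2 + j + 1 := by
    intro j _
    have := zc_mul
    ring_nf
    ring_nf at this
    linear_combination this
  rw [Finset.prod_congr rfl this]
  ring

lemma key_s12 (n : ℕ) (hn : 1 ≤ n) :
    (F0 (n + 1) : ℂ) = Complex.GammaSeq zc n * Complex.GammaSeq (1 - zc) n := by
  have hn0 : (n : ℂ) ≠ 0 := Nat.cast_ne_zero.mpr (by omega)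
  rw [gammaSeq_prod, ← Complex.cpow_add _ _ hn0]
  simp only [add_sub_cancel, Complex.cpow_one]
  rw [F0_eq n hn]
  have : ∏ j ∈ Finset.range (n + 1), ((j : ℂ) ^ 2 + (j : ℂ) + 1)
      = ((∏ j ∈ Finset.range (n + 1), ((j : ℝ) ^ 2 + (j : ℝ) + 1) : ℝ) : ℂ) := by
    push_cast; rfl
  rw [this]
  push_cast
  rfl

lemma limit_eq : Complex.Gamma zc * Complex.Gamma (1 - zc)
    = ((π / Real.cosh (Real.sqrt 3 * π / 2) : ℝ) : ℂ) := by
  rw [Complex.Gamma_mul_Gamma_one_sub]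
  have hz : (π : ℂ) * zc = (π/2 : ℝ) + ((Real.sqrt 3 * π / 2 : ℝ) : ℂ) * Complex.I := by
    unfold zc; push_cast; ring
  rw [hz, Complex.sin_add_mul_I, ← Complex.ofReal_sin, ← Complex.ofReal_cos,
    Real.sin_pi_div_two, Real.cos_pi_div_two, ← Complex.ofReal_cosh]
  push_cast
  ring_nf

theorem stmt_12 :
    Tendsto F0 atTop (nhds (π / Real.cosh (Real.sqrt 3 * π / 2))) := by
  set L : ℝ := π / Real.cosh (Real.sqrt 3 * π / 2)
  have h1 : Tendsto (fun n => Complex.GammaSeq zc n * Complex.GammaSeq (1 - zc) n) atTop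
      (nhds ((L : ℝ) : ℂ)) := by
    rw [← limit_eq]
    exact (Complex.GammaSeq_tendsto_Gamma zc).mul (Complex.GammaSeq_tendsto_Gamma (1 - zc))
  have h2 : Tendsto (fun n => ((F0 (n + 1) : ℝ) : ℂ)) atTop (nhds ((L : ℝ) : ℂ)) := by
    apply h1.congr'
    filter_upwards [eventually_ge_atTop 1] with n hn
    exact (key_s12 n hn).symm
  have h3 : Tendsto (fun n => F0 (n + 1)) atTop (nhds L) := by
    have := (Complex.continuous_re.tendsto _).comp h2
    simpa [Function.comp_def] using this
  exact (tendsto_add_atTop_iff_nat 1).mp h3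
end

section
/- For every integer α ≥ 1, the quantity 1 − α/(1+α) · Π_{i=1}^{α−1} (i+i²)/(1+i+i²) converges as α → ∞ to 1 − π/cosh(√3·π/2). -/
open Filter Real

noncomputable def aa : ℂ := (1 + Complex.I * Real.sqrt 3) / 2

lemma sqrt3_sq : (Real.sqrt 3 : ℂ) ^ 2 = 3 := by
  rw [← Complex.ofReal_pow, Real.sq_sqrt (by norm_num : (0:ℝ) ≤ 3)]
  norm_num

lemma aa_sq : aa ^ 2 = aa - 1 := by
  simp only [aa]
  linear_combination (Complex.I^2/4) * sqrt3_sq + (3/4 : ℂ) * Complex.I_sq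

lemma aa_key (z : ℂ) : (aa + z) * ((1 - aa) + z) = 1 + z + z ^ 2 := by
  linear_combination (-1 : ℂ) * aa_sq

lemma sin_pi_aa : Complex.sin (↑π * aa) = (Real.cosh (Real.sqrt 3 * π / 2) : ℂ) := by
  have h : (↑π * aa : ℂ) = (↑(π/2) : ℂ) + (↑(Real.sqrt 3 * π / 2) : ℂ) * Complex.I := by
    simp only [aa]; push_cast; ring
  rw [h, Complex.sin_add_mul_I, ← Complex.ofReal_sin, ← Complex.ofReal_cos,
    Real.sin_pi_div_two, Real.cos_pi_div_two, ← Complex.ofReal_cosh]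
  push_cast
  ring

lemma gseq_eq (n : ℕ) (hn : 1 ≤ n) :
    Complex.GammaSeq aa n * Complex.GammaSeq (1 - aa) n =
      (((n : ℝ) * ((n.factorial : ℝ))^2 /
        ∏ j ∈ Finset.range (n+1), (1 + (j:ℝ) + (j:ℝ)^2) : ℝ) : ℂ) := by
  have hn0 : (n:ℂ) ≠ 0 := Nat.cast_ne_zero.mpr (by omega)
  simp only [Complex.GammaSeq]
  rw [div_mul_div_comm, ← Finset.prod_mul_distrib, mul_mul_mul_comm,
      ← Complex.cpow_add _ _ hn0, show aa + (1 - aa) = 1 by ring, Complex.cpow_one]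
  simp only [aa_key]
  push_cast
  ring

lemma prodA (n : ℕ) : ∏ i ∈ Finset.Icc 1 n, ((i:ℝ) + (i:ℝ)^2)
    = (n.factorial : ℝ) * ((n+1).factorial : ℝ) := by
  induction n with
  | zero => simp
  | succ m ih =>
      rw [Finset.prod_Icc_succ_top (by omega : 1 ≤ m + 1), ih]
      rw [Nat.factorial_succ (m+1), Nat.factorial_succ m]
      push_cast
      ring

lemma prodB (n : ℕ) : ∏ j ∈ Finset.range (n+1), (1 + (j:ℝ) + (j:ℝ)^2)
    = ∏ i ∈ Finset.Icc 1 n, (1 + (i:ℝ) + (i:ℝ)^2) := by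
  induction n with
  | zero => simp
  | succ m ih =>
      rw [Finset.prod_range_succ, ih, Finset.prod_Icc_succ_top (by omega : 1 ≤ m + 1)]

lemma prodC (n : ℕ) : (0:ℝ) < ∏ i ∈ Finset.Icc 1 n, (1 + (i:ℝ) + (i:ℝ)^2) :=
  Finset.prod_pos fun i _ => by positivity

lemma real_eq (n : ℕ) (hn : 1 ≤ n) :
    (n : ℝ) * ((n.factorial : ℝ))^2 / ∏ j ∈ Finset.range (n+1), (1 + (j:ℝ) + (j:ℝ)^2)
    = (n:ℝ) / ((n:ℝ) + 1) *
        ∏ i ∈ Finset.Icc 1 n, ((i:ℝ) + (i:ℝ)^2) / (1 + (i:ℝ) + (i:ℝ)^2) := by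
  rw [prodB, Finset.prod_div_distrib, prodA]
  have hD := (prodC n).ne'
  have hn1 : ((n:ℝ) + 1) ≠ 0 := by positivity
  field_simp
  rw [Nat.factorial_succ]
  push_cast
  ring

theorem stmt_13 :
    Tendsto (fun α : ℕ =>
        1 - (α : ℝ) / (1 + (α : ℝ)) *
          ∏ i ∈ Finset.Icc 1 (α - 1), ((i : ℝ) + (i : ℝ) ^ 2) / (1 + (i : ℝ) + (i : ℝ) ^ 2))
      atTop (nhds (1 - π / Real.cosh (Real.sqrt 3 * π / 2))) := by
  have hC : Tendsto (fun n => Complex.GammaSeq aa n * Complex.GammaSeq (1-aa) n) atTop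
      (nhds ((π / Real.cosh (Real.sqrt 3 * π / 2) : ℝ) : ℂ)) := by
    have h := (Complex.GammaSeq_tendsto_Gamma aa).mul (Complex.GammaSeq_tendsto_Gamma (1-aa))
    rwa [Complex.Gamma_mul_Gamma_one_sub, sin_pi_aa, ← Complex.ofReal_div] at h
  have hR : Tendsto (fun n : ℕ => (n:ℝ)/((n:ℝ)+1) *
        ∏ i ∈ Finset.Icc 1 n, ((i:ℝ)+(i:ℝ)^2)/(1+(i:ℝ)+(i:ℝ)^2)) atTop
      (nhds (π / Real.cosh (Real.sqrt 3 * π / 2))) := by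
    have h2 := (Complex.continuous_re.tendsto _).comp hC
    simp only [Complex.ofReal_re] at h2
    refine h2.congr' ?_
    filter_upwards [eventually_ge_atTop 1] with n hn
    simp only [Function.comp_apply, gseq_eq n hn, Complex.ofReal_re, real_eq n hn]
  have hS := hR.comp (tendsto_sub_atTop_nat 1)
  have hinv : Tendsto (fun α : ℕ => ((1 : ℝ) - ((α:ℝ)⁻¹)^2)⁻¹) atTop (nhds 1) := by
    have h0 : Tendsto (fun α : ℕ => ((α:ℝ)⁻¹)^2) atTop (nhds 0) := by
      have h00 := tendsto_inv_atTop_zero.comp (tendsto_natCast_atTop_atTop (R := ℝ))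
      simpa using h00.pow 2
    have h1 := h0.const_sub 1
    norm_num at h1
    simpa using h1.inv₀ (by norm_num)
  have hmul := hinv.mul hS
  rw [one_mul] at hmul
  have final := hmul.const_sub 1
  refine Filter.Tendsto.congr' ?_ final
  filter_upwards [eventually_ge_atTop 2] with α hα
  have hm : ((α - 1 : ℕ) : ℝ) = (α:ℝ) - 1 := by
    rw [Nat.cast_sub (by omega)]; norm_num
  have hx2 : (2:ℝ) ≤ (α:ℝ) := by exact_mod_cast hα
  have hx0 : (α:ℝ) ≠ 0 := by positivity
  have hx1 : (1:ℝ) + (α:ℝ) ≠ 0 := by positivity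
  have hlt : (((α:ℝ))⁻¹)^2 < 1 := by
    rw [inv_pow]
    exact inv_lt_one_of_one_lt₀ (by nlinarith)
  have hne : (1:ℝ) - ((α:ℝ)⁻¹)^2 ≠ 0 := sub_ne_zero.mpr hlt.ne'
  have hcoef : ((1 : ℝ) - ((α:ℝ)⁻¹)^2)⁻¹ * (((α:ℝ)-1)/(((α:ℝ)-1)+1)) = (α:ℝ)/(1+(α:ℝ)) := by
    have hq : (α:ℝ)^2 - 1 ≠ 0 := by nlinarith
    rw [show ((1:ℝ) - ((α:ℝ)⁻¹)^2) = ((α:ℝ)^2 - 1)/(α:ℝ)^2 by field_simp,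
        show ((α:ℝ)-1)+1 = (α:ℝ) by ring]
    field_simp
    ring
  simp only [Function.comp_apply, hm]
  rw [← mul_assoc, hcoef]
end

section
/- Let n, α be positive integers, x_0 = ⌊n/(1+α)⌋, and suppose m is a positive integer with n − m·x_0 ≥ 0 and (y_1, ..., y_m) is a vector of nonnegative integers satisfying t·x_0 + Σ_{i=t}^{m} (1+(i−1)t)y_i ≤ n for t = 1,...,m. Define k = Σ_{i=1}^{m} y_i and let (x_1, ..., x_k) be the weakly decreasing integer sequence in which the value j−1 appears exactly y_j times, for j = 1,...,m. Then (x_0, x_1, ..., x_k) satisfies: (1+α)x_0 ≤ n; (x_0+x_1+...+x_i)(1+x_i) ≤ n−i for i = 1,...,k; x_1 ≥ ... ≥ x_k ≥ 0; x_0+...+x_k ≥ 0; and x_0 + Σ_{i=1}^{k} x_i = x_0 + Σ_{j=1}^{m} (j−1)y_j. -/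
theorem stmt_17 (n α : ℤ) (hn : 1 ≤ n) (hα : 1 ≤ α)
    (x₀ : ℤ) (hx₀ : x₀ = n / (1 + α))
    (m : ℕ) (hm : 1 ≤ m) (hnm : (m : ℤ) * x₀ ≤ n)
    (y : ℕ → ℤ) (hy : ∀ j, 1 ≤ j → j ≤ m → 0 ≤ y j)
    (hsys : ∀ t, 1 ≤ t → t ≤ m →
      (t : ℤ) * x₀ + ∑ i ∈ Finset.Icc t m, (1 + ((i : ℤ) - 1) * (t : ℤ)) * y i ≤ n)
    (k : ℕ) (hk : (k : ℤ) = ∑ j ∈ Finset.Icc 1 m, y j)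
    (x : ℕ → ℤ) (hx0 : x 0 = x₀)
    (hdec : ∀ i, 1 ≤ i → i < k → x (i + 1) ≤ x i)
    (hcount : ∀ j, 1 ≤ j → j ≤ m →
      (((Finset.Icc 1 k).filter (fun i => x i = (j : ℤ) - 1)).card : ℤ) = y j) :
    (1 + α) * x 0 ≤ n ∧
    (∀ i, 1 ≤ i → i ≤ k →
      (x 0 + ∑ j ∈ Finset.Icc 1 i, x j) * (1 + x i) ≤ n - (i : ℤ)) ∧
    (∀ i, 1 ≤ i → i < k → x (i + 1) ≤ x i) ∧
    (1 ≤ k → 0 ≤ x k) ∧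
    0 ≤ x 0 + ∑ j ∈ Finset.Icc 1 k, x j ∧
    x 0 + ∑ i ∈ Finset.Icc 1 k, x i = x₀ + ∑ j ∈ Finset.Icc 1 m, ((j : ℤ) - 1) * y j := by
  have hα0 : (0:ℤ) < 1 + α := by linarith
  have hx₀nn : 0 ≤ x₀ := hx₀ ▸ Int.ediv_nonneg (by linarith) (by linarith)
  have h1 : (1 + α) * x 0 ≤ n := by
    rw [hx0, hx₀]
    have h := Int.mul_ediv_add_emod n (1 + α)
    have h2 := Int.emod_nonneg n (by linarith : (1+α) ≠ 0)
    linarith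
  -- the value-class filters
  set F : ℕ → Finset ℕ := fun j => (Finset.Icc 1 k).filter (fun i => x i = (j:ℤ) - 1) with hF
  have hdisj : ∀ a ∈ Finset.Icc 1 m, ∀ b ∈ Finset.Icc 1 m, a ≠ b → Disjoint (F a) (F b) := by
    intro a _ b _ hab
    rw [Finset.disjoint_left]
    intro i hi hi'
    simp only [hF, Finset.mem_filter] at hi hi'
    apply hab
    have : (a:ℤ) = b := by linarith [hi.2, hi'.2]
    exact_mod_cast this
  have hBsub : ((Finset.Icc 1 m).biUnion F) ⊆ Finset.Icc 1 k := by
    intro i hi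
    simp only [Finset.mem_biUnion, hF, Finset.mem_filter] at hi
    obtain ⟨j, _, hi, _⟩ := hi
    exact hi
  have hcardsum : (∑ j ∈ Finset.Icc 1 m, (F j).card) = k := by
    have : ((∑ j ∈ Finset.Icc 1 m, (F j).card : ℕ) : ℤ) = (k:ℤ) := by
      push_cast
      rw [hk]
      refine Finset.sum_congr rfl fun j hj => ?_
      rw [Finset.mem_Icc] at hj
      exact hcount j hj.1 hj.2
    exact_mod_cast this
  have hBeq : ((Finset.Icc 1 m).biUnion F) = Finset.Icc 1 k := by
    apply Finset.eq_of_subset_of_card_le hBsub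
    rw [Finset.card_biUnion hdisj, hcardsum, Nat.card_Icc]
    omega
  have hval : ∀ i, i ∈ Finset.Icc 1 k → ∃ j, j ∈ Finset.Icc 1 m ∧ x i = (j:ℤ) - 1 := by
    intro i hi
    rw [← hBeq] at hi
    simp only [Finset.mem_biUnion, hF, Finset.mem_filter] at hi
    obtain ⟨j, hj, _, hxi⟩ := hi
    exact ⟨j, hj, hxi⟩
  have hxnn : ∀ i, i ∈ Finset.Icc 1 k → 0 ≤ x i := by
    intro i hi
    obtain ⟨j, hj, hxi⟩ := hval i hi
    rw [Finset.mem_Icc] at hj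
    have : (1:ℤ) ≤ j := by exact_mod_cast hj.1
    linarith [hxi]
  -- antitone on [1, k]
  have hmono : ∀ a b, 1 ≤ a → a ≤ b → b ≤ k → x b ≤ x a := by
    intro a b ha hab hbk
    induction b, hab using Nat.le_induction with
    | base => exact le_refl _
    | succ b hb ih =>
      have hbk' : b ≤ k := by omega
      have := hdec b (by omega) (by omega)
      have := ih hbk'
      linarith
  -- sum identity
  have hsumid : ∑ i ∈ Finset.Icc 1 k, x i = ∑ j ∈ Finset.Icc 1 m, ((j:ℤ) - 1) * y j := by
    rw [← hBeq, Finset.sum_biUnion hdisj]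
    refine Finset.sum_congr rfl fun j hj => ?_
    rw [Finset.mem_Icc] at hj
    have : ∑ i ∈ F j, x i = ∑ i ∈ F j, ((j:ℤ) - 1) := by
      refine Finset.sum_congr rfl fun i hi => ?_
      simp only [hF, Finset.mem_filter] at hi
      exact hi.2
    rw [this, Finset.sum_const, nsmul_eq_mul, ← hcount j hj.1 hj.2]
    ring
  refine ⟨h1, ?_, hdec, ?_, ?_, ?_⟩
  · -- main inequality
    intro i hi1 hik
    obtain ⟨t, ht, hxi⟩ := hval i (Finset.mem_Icc.mpr ⟨hi1, hik⟩)
    rw [Finset.mem_Icc] at ht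
    set G : ℕ → Finset ℕ := fun s => (Finset.Icc 1 i).filter (fun j => x j = (s:ℤ) - 1) with hG
    have hGdisj : ∀ a ∈ Finset.Icc t m, ∀ b ∈ Finset.Icc t m, a ≠ b → Disjoint (G a) (G b) := by
      intro a _ b _ hab
      rw [Finset.disjoint_left]
      intro j hj hj'
      simp only [hG, Finset.mem_filter] at hj hj'
      apply hab
      have : (a:ℤ) = b := by linarith [hj.2, hj'.2]
      exact_mod_cast this
    have hGeq : ((Finset.Icc t m).biUnion G) = Finset.Icc 1 i := by
      apply Finset.Subset.antisymm
      · intro j hj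
        simp only [Finset.mem_biUnion, hG, Finset.mem_filter] at hj
        obtain ⟨s, _, hj, _⟩ := hj
        exact hj
      · intro j hj
        rw [Finset.mem_Icc] at hj
        obtain ⟨s, hs, hxj⟩ := hval j (Finset.mem_Icc.mpr ⟨hj.1, le_trans hj.2 hik⟩)
        rw [Finset.mem_Icc] at hs
        have hge : x i ≤ x j := hmono j i hj.1 hj.2 hik
        have hst : t ≤ s := by
          have : (t:ℤ) - 1 ≤ (s:ℤ) - 1 := by rw [← hxi, ← hxj]; exact hge
          exact_mod_cast (by linarith : (t:ℤ) ≤ s)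
        simp only [Finset.mem_biUnion, hG, Finset.mem_filter]
        exact ⟨s, Finset.mem_Icc.mpr ⟨hst, hs.2⟩, Finset.mem_Icc.mpr hj, hxj⟩
    have hicard : (i:ℤ) = ∑ s ∈ Finset.Icc t m, ((G s).card : ℤ) := by
      have : (Finset.Icc 1 i).card = ∑ s ∈ Finset.Icc t m, (G s).card := by
        rw [← hGeq, Finset.card_biUnion hGdisj]
      rw [Nat.card_Icc] at this
      have h2 : i = ∑ s ∈ Finset.Icc t m, (G s).card := by omega
      rw [h2]; push_cast; ring
    have hSsum : ∑ j ∈ Finset.Icc 1 i, x j = ∑ s ∈ Finset.Icc t m, ((s:ℤ) - 1) * ((G s).card : ℤ) := by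
      rw [← hGeq, Finset.sum_biUnion hGdisj]
      refine Finset.sum_congr rfl fun s _ => ?_
      have : ∑ j ∈ G s, x j = ∑ j ∈ G s, ((s:ℤ) - 1) := by
        refine Finset.sum_congr rfl fun j hj => ?_
        simp only [hG, Finset.mem_filter] at hj
        exact hj.2
      rw [this, Finset.sum_const, nsmul_eq_mul]
      ring
    have hcle : ∀ s ∈ Finset.Icc t m, ((G s).card : ℤ) ≤ y s := by
      intro s hs
      rw [Finset.mem_Icc] at hs
      have hsub : G s ⊆ F s := by
        intro j hj
        simp only [hG, Finset.mem_filter, Finset.mem_Icc] at hj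
        simp only [hF, Finset.mem_filter, Finset.mem_Icc]
        exact ⟨⟨hj.1.1, le_trans hj.1.2 hik⟩, hj.2⟩
      calc ((G s).card : ℤ) ≤ ((F s).card : ℤ) := by exact_mod_cast Finset.card_le_card hsub
        _ = y s := hcount s (by omega) hs.2
    have hkey : (t:ℤ) * x₀ + ∑ s ∈ Finset.Icc t m, (1 + ((s:ℤ) - 1) * (t:ℤ)) * ((G s).card : ℤ) ≤ n := by
      calc (t:ℤ) * x₀ + ∑ s ∈ Finset.Icc t m, (1 + ((s:ℤ) - 1) * (t:ℤ)) * ((G s).card : ℤ)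
          ≤ (t:ℤ) * x₀ + ∑ s ∈ Finset.Icc t m, (1 + ((s:ℤ) - 1) * (t:ℤ)) * y s := by
            gcongr with s hs
            · rw [Finset.mem_Icc] at hs
              have h1s : (1:ℤ) ≤ s := by exact_mod_cast (by omega : 1 ≤ s)
              have h1t : (0:ℤ) ≤ t := by positivity
              nlinarith
            · exact hcle s hs
        _ ≤ n := hsys t ht.1 ht.2
    have hexp : ∑ s ∈ Finset.Icc t m, (1 + ((s:ℤ) - 1) * (t:ℤ)) * ((G s).card : ℤ)
        = (∑ s ∈ Finset.Icc t m, ((G s).card : ℤ))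
          + (t:ℤ) * ∑ s ∈ Finset.Icc t m, ((s:ℤ) - 1) * ((G s).card : ℤ) := by
      rw [Finset.mul_sum, ← Finset.sum_add_distrib]
      refine Finset.sum_congr rfl fun s _ => by ring
    rw [hx0, hxi, hSsum]
    rw [hexp, ← hicard] at hkey
    nlinarith [hkey]
  · intro hk1
    exact hxnn k (Finset.mem_Icc.mpr ⟨hk1, le_refl k⟩)
  · rw [hx0]
    have : 0 ≤ ∑ j ∈ Finset.Icc 1 k, x j := Finset.sum_nonneg hxnn
    linarith
  · rw [hx0, hsumid]
end
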